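/- Let x > 1, y > 0 and t ∈ (0,1] be real, and set u = x + i t y. Then, taking all arguments in [0, 2π), one has arg( 1/(u² · √(1 − 1/u)) ) = 2π − ( (3/2)·arg(u) + (1/2)·arg(u−1) ), and this value lies in the open interval (π, 2π). Here √ denotes the principal branch of the complex square root. -/
import Mathlib
set_option maxHeartbeats 1000000
open Complex Real

lemma arg_cpow_half {w : ℂ} (hw : w ≠ 0) : Complex.arg (w ^ (1/2 : ℂ)) = Complex.arg w / 2 := by
  have him : (Complex.log w * (1/2 : ℂ)).im = Complex.arg w / 2 := by
    simp [Complex.mul_im, Complex.log_im]; ring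
  rw [Complex.cpow_def_of_ne_zero hw, ← Complex.log_im, Complex.log_exp, him]
  · rw [him]; nlinarith [Complex.neg_pi_lt_arg w, Real.pi_pos]
  · rw [him]; nlinarith [Complex.arg_le_pi w, Real.pi_pos]

noncomputable def arg2pi (w : ℂ) : ℝ :=
  if Complex.arg w < 0 then Complex.arg w + 2 * Real.pi else Complex.arg w

theorem stmt_8 (x y t : ℝ) (hx : 1 < x) (hy : 0 < y) (ht : t ∈ Set.Ioc (0 : ℝ) 1) :
    (fun u : ℂ =>
      arg2pi (1 / (u ^ 2 * ((1 - 1 / u) ^ (1/2 : ℂ))))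
        = 2 * Real.pi - ((3 / 2) * arg2pi u + (1 / 2) * arg2pi (u - 1))
      ∧ arg2pi (1 / (u ^ 2 * ((1 - 1 / u) ^ (1/2 : ℂ)))) ∈
          Set.Ioo Real.pi (2 * Real.pi))
    ((x : ℂ) + (t : ℂ) * (y : ℂ) * Complex.I) := by
  simp only []
  set u : ℂ := (x : ℂ) + (t : ℂ) * (y : ℂ) * Complex.I with hu
  have hty : 0 < t * y := mul_pos ht.1 hy
  have hure : u.re = x := by simp [hu]
  have huim : u.im = t * y := by simp [hu]

  have hu0 : u ≠ 0 := by
    have h1 : u.im ≠ 0 := by rw [huim]; exact ne_of_gt hty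
    exact fun h => h1 (by rw [h, Complex.zero_im])
  have hu1re : (u - 1).re = x - 1 := by simp [hure]
  have hu1im : (u - 1).im = t * y := by simp [huim]
  have hu10 : u - 1 ≠ 0 := by
    have h1 : (u - 1).im ≠ 0 := by rw [hu1im]; exact ne_of_gt hty
    exact fun h => h1 (by rw [h, Complex.zero_im])
  set a := Complex.arg u with harg
  set b := Complex.arg (u - 1) with hbrg
  have ha0 : 0 < a := by
    rcases lt_or_eq_of_le (Complex.arg_nonneg_iff.2 (by rw [huim]; positivity)) with h | h
    · exact h
    · exfalso
      have h2 := (Complex.arg_eq_zero_iff).1 h.symm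
      rw [huim] at h2; exact (ne_of_gt hty) h2.2
  have ha2 : a < Real.pi / 2 := Complex.arg_lt_pi_div_two_iff.2 (Or.inl (by rw [hure]; linarith))
  have hb0 : 0 < b := by
    rcases lt_or_eq_of_le (Complex.arg_nonneg_iff.2 (by rw [hu1im]; positivity)) with h | h
    · exact h
    · exfalso
      have h2 := (Complex.arg_eq_zero_iff).1 h.symm
      rw [hu1im] at h2; exact (ne_of_gt hty) h2.2
  have hb2 : b < Real.pi / 2 := Complex.arg_lt_pi_div_two_iff.2 (Or.inl (by rw [hu1re]; linarith))
  have hpi := Real.pi_pos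
  have hw : (1 : ℂ) - 1 / u = (u - 1) * u⁻¹ := by field_simp
  have hargu_inv : Complex.arg u⁻¹ = -a := by
    rw [Complex.arg_inv, if_neg (by rw [← harg]; intro h; rw [h] at ha2; linarith)]
  have hargw : Complex.arg (1 - 1/u) = b - a := by
    rw [hw, Complex.arg_mul hu10 (inv_ne_zero hu0) (by
      rw [hargu_inv, ← hbrg]
      constructor <;> nlinarith), hargu_inv, ← hbrg]
    ring
  have hw0 : (1 : ℂ) - 1/u ≠ 0 := by
    rw [hw]; exact mul_ne_zero hu10 (inv_ne_zero hu0)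
  have hsqrt0 : ((1 : ℂ) - 1/u) ^ (1/2 : ℂ) ≠ 0 := by
    rw [Ne, Complex.cpow_eq_zero_iff]
    exact fun h => hw0 h.1
  have hargsqrt : Complex.arg (((1:ℂ) - 1/u) ^ (1/2 : ℂ)) = (b - a) / 2 := by
    rw [arg_cpow_half hw0, hargw]
  have hargu2 : Complex.arg (u ^ 2) = 2 * a := by
    rw [sq, Complex.arg_mul hu0 hu0 (by rw [← harg]; constructor <;> nlinarith), ← harg]
    ring
  have hu20 : u ^ 2 ≠ 0 := pow_ne_zero _ hu0
  have hargprod : Complex.arg (u ^ 2 * ((1 - 1/u) ^ (1/2 : ℂ))) = 3/2 * a + 1/2 * b := by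
    rw [Complex.arg_mul hu20 hsqrt0 (by rw [hargu2, hargsqrt]; constructor <;> nlinarith),
      hargu2, hargsqrt]
    ring
  have hargfinal : Complex.arg (1 / (u ^ 2 * ((1 - 1/u) ^ (1/2 : ℂ)))) = -(3/2 * a + 1/2 * b) := by
    rw [one_div, Complex.arg_inv,
      if_neg (by intro h; rw [hargprod] at h; nlinarith), hargprod]
  have hval : arg2pi (1 / (u ^ 2 * ((1 - 1/u) ^ (1/2 : ℂ)))) = 2 * Real.pi - (3/2 * a + 1/2 * b) := by
    simp only [arg2pi]
    rw [if_pos (by rw [hargfinal]; nlinarith), hargfinal]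
    ring
  have hau : arg2pi u = a := by
    simp only [arg2pi]
    rw [if_neg (by rw [← harg]; linarith)]
  have hbu : arg2pi (u - 1) = b := by
    simp only [arg2pi]
    rw [if_neg (by rw [← hbrg]; linarith)]
  refine ⟨by rw [hval, hau, hbu], ?_⟩
  rw [hval]
  exact ⟨by nlinarith, by nlinarith⟩
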